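/- Let G = (X, Y, E) be a bipartite graph in which every vertex of Y has at least one neighbor, let d = max_{y ∈ Y} deg(y), and let k be the minimum cardinality of a subset of X that dominates Y. Then the number of subsets D ⊆ X of cardinality k that dominate Y is at most d^k. -/

import Mathlib

open Finset

lemma aux_dom {X Y : Type} [Fintype X] [Fintype Y] [DecidableEq X] (E : X → Y → Prop)
    [∀ x y, Decidable (E x y)] (d : ℕ)
    (hd : ∀ y : Y, (Finset.univ.filter fun x : X => E x y).card ≤ d) :
    ∀ k (Y' : Finset Y),
      (∀ D : Finset X, (∀ y ∈ Y', ∃ x ∈ D, E x y) → k ≤ D.card) →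
      (Finset.univ.filter fun D : Finset X =>
          D.card = k ∧ ∀ y ∈ Y', ∃ x ∈ D, E x y).card ≤ d ^ k := by
  intro k
  induction k with
  | zero =>
      intro Y' _
      have hsub : (Finset.univ.filter fun D : Finset X =>
          D.card = 0 ∧ ∀ y ∈ Y', ∃ x ∈ D, E x y) ⊆ {(∅ : Finset X)} := by
        intro D hD
        simp only [mem_filter] at hD
        simp [Finset.card_eq_zero.mp hD.2.1]
      calc _ ≤ ({(∅ : Finset X)} : Finset (Finset X)).card := Finset.card_le_card hsub
        _ = 1 := rfl
        _ ≤ d ^ 0 := by simp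
  | succ k ih =>
      intro Y' hmin
      -- Y' is nonempty
      obtain ⟨y, hy⟩ : Y'.Nonempty := by
        by_contra h
        have := hmin ∅ (by
          intro y hyY
          exact absurd ⟨y, hyY⟩ h)
        simp at this
      -- every dominating set of size k+1 contains a neighbor of y
      set N := Finset.univ.filter fun x : X => E x y with hN
      have hsub : (Finset.univ.filter fun D : Finset X =>
          D.card = k + 1 ∧ ∀ y ∈ Y', ∃ x ∈ D, E x y) ⊆
          N.biUnion (fun x => Finset.univ.filter fun D : Finset X =>
            x ∈ D ∧ D.card = k + 1 ∧ ∀ y ∈ Y', ∃ x ∈ D, E x y) := by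
        intro D hD
        simp only [mem_filter, mem_biUnion] at hD ⊢
        obtain ⟨x, hxD, hxE⟩ := hD.2.2 y hy
        exact ⟨x, by simp [hN, hxE], ⟨mem_univ _, hxD, hD.2⟩⟩
      have hpiece : ∀ x : X, (Finset.univ.filter fun D : Finset X =>
          x ∈ D ∧ D.card = k + 1 ∧ ∀ y ∈ Y', ∃ x ∈ D, E x y).card ≤ d ^ k := by
        intro x
        set Y'' := Y'.filter fun y' => ¬ E x y' with hY''
        have hmin' : ∀ D : Finset X, (∀ y ∈ Y'', ∃ x ∈ D, E x y) → k ≤ D.card := by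
          intro D hdom
          have hdom' : ∀ y ∈ Y', ∃ x' ∈ insert x D, E x' y := by
            intro y' hy'
            by_cases hE : E x y'
            · exact ⟨x, mem_insert_self _ _, hE⟩
            · obtain ⟨x', hx', hE'⟩ := hdom y' (by simp [hY'', hy', hE])
              exact ⟨x', mem_insert_of_mem hx', hE'⟩
          have h1 := hmin _ hdom'
          have h2 : (insert x D).card ≤ D.card + 1 := Finset.card_insert_le _ _
          omega
        have hinj : (Finset.univ.filter fun D : Finset X =>
            x ∈ D ∧ D.card = k + 1 ∧ ∀ y ∈ Y', ∃ x ∈ D, E x y).card ≤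
            (Finset.univ.filter fun D : Finset X =>
            D.card = k ∧ ∀ y ∈ Y'', ∃ x ∈ D, E x y).card := by
          apply Finset.card_le_card_of_injOn (fun D => D.erase x)
          · intro D hD
            simp only [Finset.coe_filter, Set.mem_setOf_eq, mem_coe, mem_filter] at hD ⊢
            obtain ⟨-, hxD, hcard, hdom⟩ := hD
            refine ⟨mem_univ _, by rw [Finset.card_erase_of_mem hxD, hcard]; omega, ?_⟩
            intro y' hy'
            simp only [hY'', mem_filter] at hy'
            obtain ⟨x', hx', hE'⟩ := hdom y' hy'.1
            refine ⟨x', Finset.mem_erase.mpr ⟨?_, hx'⟩, hE'⟩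
            rintro rfl
            exact hy'.2 hE'
          · intro D₁ h₁ D₂ h₂ heq
            simp only [Finset.coe_filter, Set.mem_setOf_eq] at h₁ h₂
            have := congrArg (insert x) heq
            rwa [Finset.insert_erase h₁.2.1, Finset.insert_erase h₂.2.1] at this
        exact hinj.trans (ih Y'' hmin')
      calc (Finset.univ.filter fun D : Finset X =>
          D.card = k + 1 ∧ ∀ y ∈ Y', ∃ x ∈ D, E x y).card
          ≤ (N.biUnion _).card := Finset.card_le_card hsub
        _ ≤ ∑ x ∈ N, (Finset.univ.filter fun D : Finset X =>
            x ∈ D ∧ D.card = k + 1 ∧ ∀ y ∈ Y', ∃ x ∈ D, E x y).card :=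
            Finset.card_biUnion_le
        _ ≤ ∑ _x ∈ N, d ^ k := Finset.sum_le_sum fun x _ => hpiece x
        _ = N.card * d ^ k := by rw [Finset.sum_const, smul_eq_mul]
        _ ≤ d * d ^ k := Nat.mul_le_mul_right _ (hd y)
        _ = d ^ (k + 1) := by ring

/-- Let `G = (X, Y, E)` be a bipartite graph in which every vertex of `Y` has a
neighbour, let `d = max_{y ∈ Y} deg(y)`, and let `k` be the minimum cardinality of a
subset of `X` dominating `Y`.  Then the number of subsets `D ⊆ X` of cardinality `k`
that dominate `Y` is at most `d ^ k`. -/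
theorem stmt2 {X Y : Type} [Fintype X] [Fintype Y] (E : X → Y → Prop)
    [∀ x y, Decidable (E x y)]
    (hcov : ∀ y : Y, ∃ x : X, E x y)
    (d : ℕ)
    (hd : d = Finset.univ.sup fun y : Y => (Finset.univ.filter fun x : X => E x y).card)
    (k : ℕ)
    (hk : IsLeast {c : ℕ | ∃ D : Finset X, D.card = c ∧ ∀ y : Y, ∃ x ∈ D, E x y} k) :
    {D : Finset X | D.card = k ∧ ∀ y : Y, ∃ x ∈ D, E x y}.ncard ≤ d ^ k := by
  letI := Classical.decEq X
  have hd' : ∀ y : Y, (Finset.univ.filter fun x : X => E x y).card ≤ d := by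
    intro y; rw [hd]
    exact Finset.le_sup (f := fun y : Y => (Finset.univ.filter fun x : X => E x y).card)
      (Finset.mem_univ y)
  have hmin : ∀ D : Finset X, (∀ y ∈ (Finset.univ : Finset Y), ∃ x ∈ D, E x y) →
      k ≤ D.card := by
    intro D hdom
    exact hk.2 ⟨D, rfl, fun y => hdom y (mem_univ y)⟩
  have hset : {D : Finset X | D.card = k ∧ ∀ y : Y, ∃ x ∈ D, E x y} =
      ↑(Finset.univ.filter fun D : Finset X =>
        D.card = k ∧ ∀ y ∈ (Finset.univ : Finset Y), ∃ x ∈ D, E x y) := by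
    ext D; simp
  rw [hset, Set.ncard_coe_finset]
  exact aux_dom E d hd' k Finset.univ hmin
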